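/- Let λ, μ be partitions of n, padded to n-tuples. Then λ + ρ_n and μ + ρ_n agree up to permutation modulo p if and only if μ lies in the orbit of λ under the ρ_n-shifted action of the affine Weyl group of type A_{n-1} with parameter p (i.e. the group generated by the type A_{n-1} Weyl group acting on ℝ^n by permuting coordinates, together with translations by p(ε_i - ε_j)). -/

import Mathlib

def IsPartWithin (n : ℕ) (f : ℕ → ℕ) : Prop :=
  (∀ i j, i ≤ j → f j ≤ f i) ∧ ∀ i, n ≤ i → f i = 0

def psize (n : ℕ) (f : ℕ → ℕ) : ℕ := ∑ i ∈ Finset.range n, f i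

/-- for partitions `λ, μ` of `n` (padded to `n`-tuples), the tuples
`λ + ρ_n` and `μ + ρ_n` (where `ρ_n = (-1,…,-n)`, so entry `i` is `λ_i - i`) agree up
to a permutation modulo `p` if and only if `μ` lies in the orbit of `λ` under the
`ρ_n`-shifted action of the affine Weyl group `W_n^p` of type `A_{n-1}`.  An element of
`W_n^p` is a coordinate permutation followed by a translation by `p` times an element of
the root lattice, i.e. `p` times an integer vector with coordinate sum `0`. -/
theorem sim_p_iff_affine_orbit (p n : ℕ) (hp : p.Prime) (hn : 1 ≤ n)
    (f g : ℕ → ℕ) (hf : IsPartWithin n f) (hg : IsPartWithin n g)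
    (hfn : psize n f = n) (hgn : psize n g = n) :
    (∃ σ : Equiv.Perm (Fin n), ∀ i : Fin n,
        (((f (i : ℕ) : ℤ) - ((i : ℕ) + 1) : ℤ) : ZMod p)
          = (((g ((σ i : Fin n) : ℕ) : ℤ) - (((σ i : Fin n) : ℕ) + 1) : ℤ) : ZMod p))
    ↔ (∃ σ : Equiv.Perm (Fin n), ∃ t : Fin n → ℤ, (∑ i, t i) = 0 ∧
        ∀ i : Fin n, (g (i : ℕ) : ℤ) - ((i : ℕ) + 1)
          = ((f ((σ i : Fin n) : ℕ) : ℤ) - (((σ i : Fin n) : ℕ) + 1)) + p * t i) := by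
  have hp0 : (p : ℤ) ≠ 0 := by exact_mod_cast hp.ne_zero
  constructor
  · rintro ⟨σ, hσ⟩
    set d : Fin n → ℤ := fun i =>
      ((g (i : ℕ) : ℤ) - ((i : ℕ) + 1)) -
        ((f ((σ.symm i : Fin n) : ℕ) : ℤ) - (((σ.symm i : Fin n) : ℕ) + 1)) with hd
    have hdvd : ∀ i, (p : ℤ) ∣ d i := by
      intro i
      have h := hσ (σ.symm i)
      rw [σ.apply_symm_apply] at h
      have : ((d i : ℤ) : ZMod p) = 0 := by
        simp only [hd]
        push_cast
        push_cast at h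
        linear_combination -h
      exact (ZMod.intCast_zmod_eq_zero_iff_dvd _ _).mp this
    refine ⟨σ.symm, fun i => d i / p, ?_, ?_⟩
    · have hmul : ∀ i, (p : ℤ) * (d i / p) = d i := fun i =>
        Int.mul_ediv_cancel' (hdvd i)
      have hsum : (p : ℤ) * (∑ i, d i / p) = ∑ i, d i := by
        rw [Finset.mul_sum]; exact Finset.sum_congr rfl fun i _ => hmul i
      have hsumd : (∑ i, d i) = 0 := by
        simp only [hd]
        rw [Finset.sum_sub_distrib]
        have h1 : ∑ i : Fin n, ((f ((σ.symm i : Fin n) : ℕ) : ℤ) -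
            (((σ.symm i : Fin n) : ℕ) + 1))
            = ∑ i : Fin n, ((f (i : ℕ) : ℤ) - ((i : ℕ) + 1)) :=
          Equiv.sum_comp σ.symm (fun j : Fin n => (f (j : ℕ) : ℤ) - ((j : ℕ) + 1))
        rw [h1, Finset.sum_sub_distrib, Finset.sum_sub_distrib]
        have hgsum : ∑ i : Fin n, (g (i : ℕ) : ℤ) = (n : ℤ) := by
          have := hgn
          unfold psize at this
          rw [Fin.sum_univ_eq_sum_range (fun i => (g i : ℤ)) n]
          exact_mod_cast congrArg (Nat.cast : ℕ → ℤ) this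
        have hfsum : ∑ i : Fin n, (f (i : ℕ) : ℤ) = (n : ℤ) := by
          have := hfn
          unfold psize at this
          rw [Fin.sum_univ_eq_sum_range (fun i => (f i : ℤ)) n]
          exact_mod_cast congrArg (Nat.cast : ℕ → ℤ) this
        rw [hgsum, hfsum]
        ring
      have := hsum.trans hsumd
      exact (mul_eq_zero.mp this).resolve_left hp0
    · intro i
      have := Int.mul_ediv_cancel' (hdvd i)
      simp only [hd] at this ⊢
      linarith
  · rintro ⟨σ, t, _, hσ⟩
    refine ⟨σ.symm, fun i => ?_⟩
    have h := hσ (σ.symm i)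
    rw [σ.apply_symm_apply] at h
    rw [h]
    push_cast
    simp [ZMod.natCast_self]
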